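/- Let S = U·D·H·Rz(γ) be a (non-unitary) N-type operator with D = diag(cos θ, sin θ). If the first qubit of a 1D cluster state with information |ψ⟩ encoded is projected onto the state proportional to (S†)^{−1}·Rz(−ξ)·H|1⟩ (outcome 1 in the Strategy-I basis), the teleported gate is Rx(μ′)·H·Rz(ξ) where the byproduct angle μ′ satisfies tan(μ′/2) = (1 − cos 2θ cos(γ − ξ)) / (cos 2θ sin(γ − ξ)). -/

import Mathlib

open Matrix

noncomputable section

def Rz (ξ : ℂ) : Matrix (Fin 2) (Fin 2) ℂ :=
  !![Complex.exp (-Complex.I * ξ / 2), 0; 0, Complex.exp (Complex.I * ξ / 2)]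

def Hm : Matrix (Fin 2) (Fin 2) ℂ := ((Real.sqrt 2 : ℂ))⁻¹ • !![1, 1; 1, -1]

def Rx (ξ : ℂ) : Matrix (Fin 2) (Fin 2) ℂ := Hm * Rz ξ * Hm

def Zm : Matrix (Fin 2) (Fin 2) ℂ := !![1, 0; 0, -1]

def e1 : Fin 2 → ℂ := fun i => if i = 1 then 1 else 0

def plus : Fin 2 → ℂ := fun _ => ((Real.sqrt 2 : ℂ))⁻¹

def minus : Fin 2 → ℂ := fun i =>
  if i = 0 then ((Real.sqrt 2 : ℂ))⁻¹ else -((Real.sqrt 2 : ℂ))⁻¹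

lemma sqrt2C_ne : ((Real.sqrt 2 : ℂ)) ≠ 0 :=
  Complex.ofReal_ne_zero.mpr (Real.sqrt_pos.mpr (by norm_num)).ne'

lemma sqrt2C_sq : ((Real.sqrt 2 : ℂ)) * ((Real.sqrt 2 : ℂ)) = 2 := by
  rw [← Complex.ofReal_mul, Real.mul_self_sqrt (by norm_num)]
  norm_num

lemma Hm_conjT : Hmᴴ = Hm := by
  ext i j
  fin_cases i <;> fin_cases j <;>
    simp [Hm, Matrix.conjTranspose_apply, Complex.ext_iff]

lemma Hm_mul_Hm : Hm * Hm = 1 := by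
  rw [Hm, Matrix.smul_mul, Matrix.mul_smul, smul_smul]
  rw [show (!![1, 1; 1, -1] * !![1, 1; 1, -1] : Matrix (Fin 2) (Fin 2) ℂ)
      = (2:ℂ) • 1 by
    ext i j
    fin_cases i <;> fin_cases j <;> simp [Matrix.mul_apply, Fin.sum_univ_succ] <;> norm_num]
  rw [smul_smul]
  rw [show ((Real.sqrt 2 : ℂ))⁻¹ * ((Real.sqrt 2 : ℂ))⁻¹ * 2 = 1 by
    field_simp [sqrt2C_ne]
    rw [sq]; exact sqrt2C_sq.symm]
  exact one_smul _ _

lemma Rz_conjT (x : ℝ) : (Rz (x:ℂ))ᴴ = Rz ((-x : ℝ):ℂ) := by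
  ext i j
  fin_cases i <;> fin_cases j <;>
    simp [Rz, Matrix.conjTranspose_apply, ← Complex.exp_conj, map_div₀,
      Complex.conj_I, Complex.conj_ofReal, map_ofNat]

lemma dot_reduce (A B : Matrix (Fin 2) (Fin 2) ℂ) (x y : Fin 2 → ℂ) :
    star (A.mulVec x) ⬝ᵥ B.mulVec y = star x ⬝ᵥ ((Aᴴ * B).mulVec y) := by
  rw [Matrix.star_mulVec, Matrix.dotProduct_mulVec, Matrix.vecMul_vecMul,
    ← Matrix.dotProduct_mulVec]

lemma key_rot (p q : ℝ) (hp : 0 < p) :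
    ((p:ℂ) + q * Complex.I) * Complex.exp (-(2 * (Real.arctan (q/p) : ℝ) : ℂ) * Complex.I)
      = (p:ℂ) - q * Complex.I := by
  set α := Real.arctan (q/p) with hα
  have hcos : Real.cos α ≠ 0 := (Real.cos_arctan_pos _).ne'
  have htan : Real.tan α = q / p := Real.tan_arctan _
  have hpq : p * Real.sin α = q * Real.cos α := by
    rw [Real.tan_eq_sin_div_cos] at htan
    field_simp at htan
    linarith [htan]
  have hw : Complex.exp (-(α:ℂ) * Complex.I)
      = (Real.cos α : ℂ) - (Real.sin α : ℂ) * Complex.I := by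
    rw [Complex.exp_mul_I]
    rw [show (-(α:ℂ)) = ((-α : ℝ) : ℂ) by push_cast; ring]
    simp [← Complex.ofReal_cos, ← Complex.ofReal_sin, Real.cos_neg, Real.sin_neg]
    ring
  have h2 : Complex.exp (-(2 * (α:ℝ) : ℂ) * Complex.I)
      = Complex.exp (-(α:ℂ) * Complex.I) * Complex.exp (-(α:ℂ) * Complex.I) := by
    rw [← Complex.exp_add]; ring_nf
  rw [h2, hw]
  have hs2 : (Real.sin α:ℂ)^2 + (Real.cos α:ℂ)^2 = 1 := by
    norm_cast; exact Real.sin_sq_add_cos_sq α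
  have hpqC : (p:ℂ) * (Real.sin α:ℂ) = (q:ℂ) * (Real.cos α:ℂ) := by exact_mod_cast hpq
  have hI : Complex.I^2 = -1 := Complex.I_sq
  set s := (Real.sin α : ℂ)
  set c := (Real.cos α : ℂ)
  linear_combination ((p:ℂ) - q*Complex.I) * hs2 + (-2*s - 2*c*Complex.I) * hpqC
    + ((p:ℂ)*s^2 - 2*(q:ℂ)*s*c + (q:ℂ)*s^2*Complex.I) * hI

set_option maxHeartbeats 1000000 in
/-- For a non-unitary N-type operator S = U·D·H·Rz(γ), outcome 1 in the Strategy-I basis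
(projection onto |m⊥⟩ ∝ S·Rz(−ξ)·H|1⟩) teleports the gate Rx(μ′)·H·Rz(ξ) (up to global
phase and normalization), where tan(μ′/2) = (1 − cos2θ cos(γ−ξ))/(cos2θ sin(γ−ξ)). -/
theorem strategyI_byproduct_angle (U : Matrix (Fin 2) (Fin 2) ℂ) (hU : Uᴴ * U = 1)
    (θ γ ξ : ℝ) (hθ1 : 0 < θ) (hθ2 : θ < Real.pi / 2) (hθ3 : θ ≠ Real.pi / 4) :
    let D : Matrix (Fin 2) (Fin 2) ℂ := !![(Real.cos θ : ℂ), 0; 0, (Real.sin θ : ℂ)]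
    let S : Matrix (Fin 2) (Fin 2) ℂ := U * D * Hm * Rz (γ : ℂ)
    -- the (unnormalized) outcome-1 measurement vector |m⊥⟩ ∝ S Rz(−ξ) H |1⟩
    let v : Fin 2 → ℂ := (S * Rz ((-ξ : ℝ) : ℂ) * Hm).mulVec e1
    -- teleported gate M⊥ = H(⟨m⊥|S|+⟩ I + ⟨m⊥|S|−⟩ Z) (normalization absorbed below)
    let Mperp : Matrix (Fin 2) (Fin 2) ℂ :=
      Hm * ((star v ⬝ᵥ S.mulVec plus) • (1 : Matrix (Fin 2) (Fin 2) ℂ) +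
        (star v ⬝ᵥ S.mulVec minus) • Zm)
    ∃ (μ' : ℝ) (c : ℂ), c ≠ 0 ∧
      Real.tan (μ' / 2) =
        (1 - Real.cos (2 * θ) * Real.cos (γ - ξ)) / (Real.cos (2 * θ) * Real.sin (γ - ξ)) ∧
      Mperp = c • (Rx ((μ' : ℝ) : ℂ) * Hm * Rz (ξ : ℂ)) := by
  intro D S v Mperp
  set cθ := Real.cos (2 * θ) with hcθ
  -- |cθ| < 1
  have hsin2θ : 0 < Real.sin (2 * θ) :=
    Real.sin_pos_of_pos_of_lt_pi (by linarith) (by linarith)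
  have habs : |cθ| < 1 := by
    have h1 : cθ ^ 2 < 1 := by
      have := Real.sin_sq_add_cos_sq (2 * θ)
      nlinarith
    nlinarith [abs_nonneg cθ, sq_abs cθ]
  set δ := γ - ξ with hδ
  set p := 1 - cθ * Real.cos δ with hpdef
  set q := -(cθ * Real.sin δ) with hqdef
  have hp : 0 < p := by
    have h1 : |cθ * Real.cos δ| < 1 := by
      rw [abs_mul]
      calc |cθ| * |Real.cos δ| ≤ |cθ| * 1 :=
            mul_le_mul_of_nonneg_left (Real.abs_cos_le_one δ) (abs_nonneg _)
        _ = |cθ| := mul_one _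
        _ < 1 := habs
    have := abs_lt.mp h1
    simp only [hpdef]; linarith [this.1, this.2]
  set α := Real.arctan (q / p) with hαdef
  set μ' := 2 * α + Real.pi with hμdef
  -- the S†S computation
  have hSS : Sᴴ * S = (2:ℂ)⁻¹ • !![1, (cθ : ℂ) * Complex.exp ((γ:ℂ) * Complex.I);
      (cθ : ℂ) * Complex.exp (-(γ:ℂ) * Complex.I), 1] := by
    have h1 : Sᴴ * S = (Rz γ)ᴴ * (Hmᴴ * (Dᴴ * ((Uᴴ * U) * (D * (Hm * Rz γ))))) := by
      simp only [S, Matrix.conjTranspose_mul, Matrix.mul_assoc]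
    rw [hU, Matrix.one_mul, Hm_conjT, Rz_conjT] at h1
    rw [h1]
    have hD : Dᴴ = D := by
      ext i j
      fin_cases i <;> fin_cases j <;>
        simp [D, Matrix.conjTranspose_apply, ← Complex.ofReal_cos, ← Complex.ofReal_sin,
          Complex.conj_ofReal]
    rw [hD]
    have hr : (((Real.sqrt 2 : ℝ) : ℂ))⁻¹ ^ 2 = 1/2 := by
      rw [sq, ← mul_inv, sqrt2C_sq]
      norm_num
    have he : Complex.exp (Complex.I * (γ:ℂ) * (1/2)) * Complex.exp (Complex.I * (γ:ℂ) * (-1/2)) = 1 := by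
      rw [← Complex.exp_add]; ring_nf; exact Complex.exp_zero
    have hp2 : Complex.exp (Complex.I * (γ:ℂ) * (1/2)) * Complex.exp (Complex.I * (γ:ℂ) * (1/2))
        = Complex.exp (Complex.I * (γ:ℂ)) := by
      rw [← Complex.exp_add]; ring_nf
    have hm2 : Complex.exp (Complex.I * (γ:ℂ) * (-1/2)) * Complex.exp (Complex.I * (γ:ℂ) * (-1/2))
        = Complex.exp (-(Complex.I * (γ:ℂ))) := by
      rw [← Complex.exp_add]; ring_nf
    have hcs : Complex.cos (θ:ℂ) ^ 2 + Complex.sin (θ:ℂ) ^ 2 = 1 := Complex.cos_sq_add_sin_sq _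
    have hc2 : Complex.cos (θ:ℂ) ^ 2 - Complex.sin (θ:ℂ) ^ 2 = Complex.cos ((θ:ℂ) * 2) := by
      rw [show ((θ:ℂ) * 2) = 2 * (θ:ℂ) by ring, Complex.cos_two_mul]
      linear_combination - hcs
    rw [hcθ]
    ext i j
    fin_cases i <;> fin_cases j <;>
      simp [D, Rz, Hm, Matrix.mul_apply, Fin.sum_univ_succ, Matrix.smul_apply] <;>
      ring_nf
    · linear_combination (((Real.sqrt 2:ℝ):ℂ))⁻¹^2*(Complex.cos (θ:ℂ)^2+Complex.sin (θ:ℂ)^2)*he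
        + (Complex.cos (θ:ℂ)^2+Complex.sin (θ:ℂ)^2)*hr + (1/2)*hcs
    · linear_combination (((Real.sqrt 2:ℝ):ℂ))⁻¹^2*(Complex.cos (θ:ℂ)^2-Complex.sin (θ:ℂ)^2)*hp2
        + Complex.exp (Complex.I * (γ:ℂ))*(Complex.cos (θ:ℂ)^2-Complex.sin (θ:ℂ)^2)*hr
        + (Complex.exp (Complex.I * (γ:ℂ))/2)*hc2
    · linear_combination (((Real.sqrt 2:ℝ):ℂ))⁻¹^2*(Complex.cos (θ:ℂ)^2-Complex.sin (θ:ℂ)^2)*hm2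
        + Complex.exp (-(Complex.I * (γ:ℂ)))*(Complex.cos (θ:ℂ)^2-Complex.sin (θ:ℂ)^2)*hr
        + (Complex.exp (-(Complex.I * (γ:ℂ)))/2)*hc2
    · linear_combination (((Real.sqrt 2:ℝ):ℂ))⁻¹^2*(Complex.cos (θ:ℂ)^2+Complex.sin (θ:ℂ)^2)*he
        + (Complex.cos (θ:ℂ)^2+Complex.sin (θ:ℂ)^2)*hr + (1/2)*hcs
  -- explicit a ± b
  have ha_b : (star v ⬝ᵥ S.mulVec plus) + (star v ⬝ᵥ S.mulVec minus)
      = (2:ℂ)⁻¹ * Complex.exp (-Complex.I * ξ / 2)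
        * (1 - (cθ:ℂ) * Complex.exp (-(δ:ℂ) * Complex.I)) := by
    have hG : (S * Rz ((-ξ:ℝ):ℂ) * Hm)ᴴ * S = Hmᴴ * ((Rz ((-ξ:ℝ):ℂ))ᴴ * (Sᴴ * S)) := by
      simp only [Matrix.conjTranspose_mul, Matrix.mul_assoc]
    rw [Rz_conjT, neg_neg, Hm_conjT, hSS] at hG
    simp only [v, dot_reduce, hG]
    simp [Matrix.mulVec, dotProduct, Fin.sum_univ_succ, e1, plus, minus, Hm, Rz,
      Matrix.mul_apply, Matrix.smul_apply, hδ]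
    ring_nf
    have hr : (((Real.sqrt 2 : ℝ) : ℂ))⁻¹ ^ 2 = 1/2 := by
      rw [sq, ← mul_inv, sqrt2C_sq]; norm_num
    have hE : Complex.exp (Complex.I*(ξ:ℂ)*(1/2)) * Complex.exp (-(Complex.I*(γ:ℂ)))
        = Complex.exp (Complex.I*(ξ:ℂ)*(-1/2)) * Complex.exp (Complex.I*(ξ:ℂ) - Complex.I*(γ:ℂ)) := by
      rw [← Complex.exp_add, ← Complex.exp_add]; ring_nf
    linear_combination (Complex.exp (Complex.I*(ξ:ℂ)*(-1/2))
        - Complex.exp (Complex.I*(ξ:ℂ)*(1/2))*(cθ:ℂ)*Complex.exp (-(Complex.I*(γ:ℂ))))*hr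
      - ((cθ:ℂ)/2)*hE
  have hamb : (star v ⬝ᵥ S.mulVec plus) - (star v ⬝ᵥ S.mulVec minus)
      = -((2:ℂ)⁻¹ * Complex.exp (Complex.I * ξ / 2)
        * (1 - (cθ:ℂ) * Complex.exp ((δ:ℂ) * Complex.I))) := by
    have hG : (S * Rz ((-ξ:ℝ):ℂ) * Hm)ᴴ * S = Hmᴴ * ((Rz ((-ξ:ℝ):ℂ))ᴴ * (Sᴴ * S)) := by
      simp only [Matrix.conjTranspose_mul, Matrix.mul_assoc]
    rw [Rz_conjT, neg_neg, Hm_conjT, hSS] at hG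
    simp only [v, dot_reduce, hG]
    simp [Matrix.mulVec, dotProduct, Fin.sum_univ_succ, e1, plus, minus, Hm, Rz,
      Matrix.mul_apply, Matrix.smul_apply, hδ]
    ring_nf
    have hr : (((Real.sqrt 2 : ℝ) : ℂ))⁻¹ ^ 2 = 1/2 := by
      rw [sq, ← mul_inv, sqrt2C_sq]; norm_num
    have hE2 : Complex.exp (Complex.I*(ξ:ℂ)*(-1/2)) * Complex.exp (Complex.I*(γ:ℂ))
        = Complex.exp (Complex.I*(ξ:ℂ)*(1/2)) * Complex.exp (-(Complex.I*(ξ:ℂ)) + Complex.I*(γ:ℂ)) := by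
      rw [← Complex.exp_add, ← Complex.exp_add]; ring_nf
    linear_combination (Complex.exp (Complex.I*(ξ:ℂ)*(-1/2))*(cθ:ℂ)*Complex.exp (Complex.I*(γ:ℂ))
        - Complex.exp (Complex.I*(ξ:ℂ)*(1/2)))*hr + ((cθ:ℂ)/2)*hE2
  -- z = p + q i
  have hz : (1 : ℂ) - (cθ:ℂ) * Complex.exp ((δ:ℂ) * Complex.I) = (p:ℂ) + (q:ℂ) * Complex.I := by
    rw [Complex.exp_mul_I]
    rw [show Complex.cos (δ:ℂ) = ((Real.cos δ : ℝ) : ℂ) by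
      rw [Complex.ofReal_cos],
      show Complex.sin (δ:ℂ) = ((Real.sin δ : ℝ) : ℂ) by rw [Complex.ofReal_sin]]
    push_cast [hpdef, hqdef]
    ring
  have hzbar : (1 : ℂ) - (cθ:ℂ) * Complex.exp (-(δ:ℂ) * Complex.I)
      = (p:ℂ) - (q:ℂ) * Complex.I := by
    rw [show (-(δ:ℂ)) = ((-δ : ℝ) : ℂ) by push_cast; ring, Complex.exp_mul_I]
    rw [show Complex.cos ((-δ:ℝ):ℂ) = ((Real.cos (-δ) : ℝ) : ℂ) by rw [Complex.ofReal_cos],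
      show Complex.sin ((-δ:ℝ):ℂ) = ((Real.sin (-δ) : ℝ) : ℂ) by rw [Complex.ofReal_sin]]
    push_cast [hpdef, hqdef, Real.cos_neg, Real.sin_neg]
    ring
  have hzne : (1 : ℂ) - (cθ:ℂ) * Complex.exp ((δ:ℂ) * Complex.I) ≠ 0 := by
    rw [hz]
    intro h
    have h2 : (p:ℝ) = 0 := by
      have := congrArg Complex.re h
      simpa using this
    linarith
  refine ⟨μ', ((star v ⬝ᵥ S.mulVec plus) - (star v ⬝ᵥ S.mulVec minus))
      * Complex.exp (-(Complex.I * μ' / 2)) * Complex.exp (-(Complex.I * ξ / 2)), ?_, ?_, ?_⟩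
  · apply mul_ne_zero
    apply mul_ne_zero
    · rw [hamb]
      apply neg_ne_zero.mpr
      apply mul_ne_zero (mul_ne_zero (by norm_num) (Complex.exp_ne_zero _)) hzne
    · exact Complex.exp_ne_zero _
    · exact Complex.exp_ne_zero _
  · -- the tan identity
    have h1 : μ' / 2 = α + Real.pi/2 := by rw [hμdef]; ring
    rw [h1]
    have h2 : Real.tan (α + Real.pi/2) = -(Real.tan α)⁻¹ := by
      rw [show α + Real.pi/2 = α - Real.pi/2 + Real.pi by ring,
        Real.tan_periodic (α - Real.pi/2),
        show α - Real.pi/2 = -(Real.pi/2 - α) by ring, Real.tan_neg,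
        Real.tan_pi_div_two_sub]
    rw [h2, hαdef, Real.tan_arctan, inv_div, hqdef, div_neg, neg_neg]
  · -- the matrix identity
    have hHH : Hm * (Hm * Rz (ξ:ℂ)) = Rz (ξ:ℂ) := by
      rw [← Matrix.mul_assoc, Hm_mul_Hm, Matrix.one_mul]
    have hRx : Rx (μ':ℂ) * Hm * Rz (ξ:ℂ) = Hm * (Rz (μ':ℂ) * Rz (ξ:ℂ)) := by
      simp only [Rx, Matrix.mul_assoc, hHH]
    rw [hRx, ← Matrix.mul_smul]
    show Hm * _ = _
    congr 1
    have hkey := key_rot p q hp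
    rw [← hαdef] at hkey
    obtain ⟨a, ha⟩ : ∃ x, star v ⬝ᵥ S.mulVec plus = x := ⟨_, rfl⟩
    obtain ⟨b, hb⟩ : ∃ x, star v ⬝ᵥ S.mulVec minus = x := ⟨_, rfl⟩
    rw [ha, hb] at ha_b hamb ⊢
    clear ha hb hU hSS hzne
    clear_value D S v Mperp
    clear Mperp v S D U
    clear_value cθ δ p q α μ'
    ext i j
    fin_cases i <;> fin_cases j <;>
      simp [Zm, Rz, Matrix.mul_apply, Fin.sum_univ_succ, Matrix.one_apply, Matrix.smul_apply]
    all_goals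
      have hM : Complex.exp (Complex.I * (μ':ℂ) * (-1/2)) * Complex.exp (Complex.I * (μ':ℂ) * (-1/2))
          = -Complex.exp (-(2*(α:ℂ)) * Complex.I) := by
        rw [← Complex.exp_add, hμdef]
        push_cast
        rw [show Complex.I * (2*(α:ℂ) + (Real.pi:ℂ)) * (-1/2) + Complex.I * (2*(α:ℂ) + (Real.pi:ℂ)) * (-1/2)
            = -(2*(α:ℂ)) * Complex.I + -((Real.pi:ℂ) * Complex.I) by ring]
        rw [Complex.exp_add, Complex.exp_neg, Complex.exp_pi_mul_I]
        norm_num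
      have hEF : Complex.exp (Complex.I * (ξ:ℂ) * (-1/2)) * Complex.exp (Complex.I * (ξ:ℂ) * (1/2)) = 1 := by
        rw [← Complex.exp_add]; ring_nf; exact Complex.exp_zero
      have hMM : Complex.exp (Complex.I * (μ':ℂ) * (-1/2)) * Complex.exp (Complex.I * (μ':ℂ) * (1/2)) = 1 := by
        rw [← Complex.exp_add]; ring_nf; exact Complex.exp_zero
      set E := Complex.exp (Complex.I * (ξ:ℂ) * (-1/2))
      set F := Complex.exp (Complex.I * (ξ:ℂ) * (1/2))
    · rw [ha_b, hamb, hz, hzbar]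
      ring_nf
      linear_combination ((1/2)*E^2*F*((p:ℂ)+(q:ℂ)*Complex.I))*hM - ((1/2)*E^2*F)*hkey
        - ((1/2)*E*((p:ℂ)-(q:ℂ)*Complex.I))*hEF
    · rw [hamb, hz]
      ring_nf
      linear_combination (norm := (unfold E F at *; ring_nf)) hamb + (-(1/2)*F)*hz
        + ((1/2)*F^2*E*((p:ℂ)+(q:ℂ)*Complex.I))*hMM
        + ((1/2)*F*((p:ℂ)+(q:ℂ)*Complex.I))*hEF

end
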